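/- Let L ≥ 1, k ≥ 2, c ≥ 1 be natural numbers, and let x : ℕ → ZMod (2^64) be L-periodic (x (i + L) = x i for all i). Suppose x is k-dimensionally equidistributed over its period: for every k-tuple t : Fin k → ZMod (2^64), the number of indices i ∈ {0, …, L-1} such that x (i + j) = t j for all j < k equals c if t is not the zero tuple, and equals c - 1 if t is the zero tuple. Define y : ℕ → ZMod (2^64) by y i = x i + x (i + 1). Then y is (k-1)-dimensionally equidistributed: for every (k-1)-tuple u : Fin (k-1) → ZMod (2^64), the number of indices i ∈ {0, …, L-1} such that y (i + j) = u j for all j < k-1 equals 2^64 · c if u is not the zero tuple, and equals 2^64 · c - 1 if u is the zero tuple. -/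

import Mathlib

/-- If an `L`-periodic sequence `x` over `ZMod (2^64)` is `k`-dimensionally
equidistributed (each nonzero `k`-tuple appears `c` times over the period, the
zero tuple `c - 1` times), then the sequence `y i = x i + x (i+1)` is
`(k-1)`-dimensionally equidistributed with multiplicity `2^64 * c`. -/
theorem xorshift_plus_equidistribution
    (L k c : ℕ) (hL : 1 ≤ L) (hk : 2 ≤ k) (hc : 1 ≤ c)
    (x : ℕ → ZMod (2 ^ 64)) (hper : ∀ i, x (i + L) = x i)
    (hequi : ∀ t : Fin k → ZMod (2 ^ 64),
      ((Finset.range L).filter (fun i => ∀ j : Fin k, x (i + j.val) = t j)).card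
        = if t = 0 then c - 1 else c) :
    ∀ u : Fin (k - 1) → ZMod (2 ^ 64),
      ((Finset.range L).filter
          (fun i => ∀ j : Fin (k - 1), x (i + j.val) + x (i + j.val + 1) = u j)).card
        = if u = 0 then 2 ^ 64 * c - 1 else 2 ^ 64 * c := by
  intro u
  classical
  haveI : NeZero ((2 : ℕ) ^ 64) := ⟨by positivity⟩
  set U : ℕ → ZMod (2 ^ 64) := fun j => if h : j < k - 1 then u ⟨j, h⟩ else 0 with hU
  set f : ZMod (2 ^ 64) → ℕ → ZMod (2 ^ 64) :=
    fun a => Nat.rec a (fun j v => U j - v) with hf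
  have hf0 : ∀ a, f a 0 = a := fun _ => rfl
  have hfs : ∀ a j, f a (j + 1) = U j - f a j := fun _ _ => rfl
  set S := (Finset.range L).filter
      (fun i => ∀ j : Fin (k - 1), x (i + j.val) + x (i + j.val + 1) = u j) with hS
  have key : ∀ a : ZMod (2 ^ 64),
      (S.filter fun i => x i = a)
        = (Finset.range L).filter (fun i => ∀ j : Fin k, x (i + j.val) = f a j.val) := by
    intro a
    ext i
    simp only [hS, Finset.filter_filter, Finset.mem_filter, Finset.mem_range, and_assoc]
    constructor
    · rintro ⟨hiL, hsum, hxi⟩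
      refine ⟨hiL, ?_⟩
      have main : ∀ j, j < k → x (i + j) = f a j := by
        intro j
        induction j with
        | zero => intro _; simpa [hf0] using hxi
        | succ n ih =>
          intro hj
          have hn : n < k - 1 := by omega
          have hxn : x (i + n) = f a n := ih (by omega)
          have hsn : x (i + n) + x (i + n + 1) = u ⟨n, hn⟩ := hsum ⟨n, hn⟩
          have hUn : U n = u ⟨n, hn⟩ := by simp [hU, hn]
          show x (i + n + 1) = U n - f a n
          rw [hUn, ← hxn, ← hsn]
          ring
      exact fun j => main j.val j.isLt
    · rintro ⟨hiL, htup⟩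
      have h0 : x i = a := by
        have := htup ⟨0, by omega⟩
        simpa [hf0] using this
      refine ⟨hiL, ?_, h0⟩
      intro j
      have h1 : x (i + j.val) = f a j.val := htup ⟨j.val, by omega⟩
      have h2 : x (i + j.val + 1) = U j.val - f a j.val := htup ⟨j.val + 1, by omega⟩
      have hUj : U j.val = u j := by simp [hU, j.isLt]
      rw [h1, h2, hUj]
      ring
  have hzero : ∀ a : ZMod (2 ^ 64),
      (fun j : Fin k => f a j.val) = 0 ↔ (a = 0 ∧ u = 0) := by
    intro a
    constructor
    · intro h
      have hval : ∀ j : Fin k, f a j.val = 0 := fun j => congrFun h j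
      have ha : a = 0 := by
        have := hval ⟨0, by omega⟩
        simpa [hf0] using this
      refine ⟨ha, ?_⟩
      funext j
      have hj1 : (j.val : ℕ) < k := by omega
      have hj2 : j.val + 1 < k := by
        have := j.isLt
        omega
      have e1 : f a j.val = 0 := hval ⟨j.val, hj1⟩
      have e2 : f a (j.val + 1) = 0 := hval ⟨j.val + 1, hj2⟩
      have hUj : U j.val = u j := by simp [hU, j.isLt]
      have : U j.val - f a j.val = 0 := by rw [← hfs]; exact e2
      rw [e1, sub_zero] at this
      rw [← hUj, this]
      rfl
    · rintro ⟨rfl, rfl⟩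
      have hU0 : ∀ j, U j = 0 := by
        intro j
        simp [hU]
      have hfz : ∀ j, f 0 j = 0 := by
        intro j
        induction j with
        | zero => rfl
        | succ n ih => rw [hfs, hU0, ih, sub_zero]
      funext j
      exact hfz j.val
  have hcard := Finset.card_eq_sum_card_fiberwise
      (s := S) (t := (Finset.univ : Finset (ZMod (2 ^ 64)))) (f := fun i => x i)
      (fun i _ => Finset.mem_univ _)
  have hterm : ∀ a : ZMod (2 ^ 64),
      (S.filter fun i => x i = a).card = if a = 0 ∧ u = 0 then c - 1 else c := by
    intro a
    rw [key a, hequi (fun j : Fin k => f a j.val)]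
    simp only [hzero a]
  rw [hcard, Finset.sum_congr rfl (fun a _ => hterm a)]
  have hcardu : (Finset.univ : Finset (ZMod (2 ^ 64))).card = 2 ^ 64 := by
    rw [Finset.card_univ, ZMod.card]
  by_cases hu : u = 0
  · rw [if_pos hu]
    rw [← Finset.add_sum_erase _ _ (Finset.mem_univ (0 : ZMod (2 ^ 64)))]
    rw [if_pos ⟨rfl, hu⟩]
    rw [Finset.sum_congr rfl
      (fun a ha => if_neg (fun h => Finset.ne_of_mem_erase ha h.1))]
    rw [Finset.sum_const, Finset.card_erase_of_mem (Finset.mem_univ _), hcardu,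
      smul_eq_mul]
    have h64 : (2 : ℕ) ^ 64 = 18446744073709551616 := by norm_num
    rw [h64]
    omega
  · rw [if_neg hu]
    rw [Finset.sum_congr rfl (fun a _ => if_neg (fun h => hu h.2))]
    rw [Finset.sum_const, hcardu, smul_eq_mul]
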